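/- If f : D → D is holomorphic and z ≠ ζ in D, then |(1 − f(z)·conj(f(ζ)))/(1 − z·conj(ζ))|² ≤ ((1 − |f(z)|²)/(1 − |z|²)) · ((1 − |f(ζ)|²)/(1 − |ζ|²)). -/

import Mathlib

open Metric Set

noncomputable def mob (a w : ℂ) : ℂ := (a - w) / (1 - (starRingEnd ℂ) a * w)

lemma mob_denom_ne {a w : ℂ} (ha : ‖a‖ < 1) (hw : ‖w‖ < 1) :
    (1 : ℂ) - (starRingEnd ℂ) a * w ≠ 0 := by
  intro h
  have h1 : (1 : ℂ) = (starRingEnd ℂ) a * w := by linear_combination h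
  have h2 : ‖(starRingEnd ℂ) a * w‖ < 1 := by
    rw [norm_mul, RCLike.norm_conj]
    nlinarith [norm_nonneg a, norm_nonneg w]
  rw [← h1] at h2
  simp at h2

lemma key_id (a w : ℂ) :
    ‖1 - (starRingEnd ℂ) a * w‖ ^ 2 - ‖a - w‖ ^ 2 = (1 - ‖a‖ ^ 2) * (1 - ‖w‖ ^ 2) := by
  have hC : ((1 : ℂ) - (starRingEnd ℂ) a * w) * (starRingEnd ℂ) (1 - (starRingEnd ℂ) a * w)
      - (a - w) * (starRingEnd ℂ) (a - w)
      = (1 - a * (starRingEnd ℂ) a) * (1 - w * (starRingEnd ℂ) w) := by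
    simp only [map_sub, map_mul, map_one, Complex.conj_conj]
    ring
  have e1 : ∀ x : ℂ, x * (starRingEnd ℂ) x = ((‖x‖ ^ 2 : ℝ) : ℂ) := by
    intro x
    rw [Complex.mul_conj]
    norm_cast
    rw [Complex.sq_norm]
  rw [e1, e1, e1, e1] at hC
  exact_mod_cast hC

lemma mob_maps {a w : ℂ} (ha : ‖a‖ < 1) (hw : ‖w‖ < 1) : ‖mob a w‖ < 1 := by
  have hden := mob_denom_ne ha hw
  have hdenpos : 0 < ‖(1 : ℂ) - (starRingEnd ℂ) a * w‖ := norm_pos_iff.2 hden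
  have hk := key_id a w
  have ha2 : ‖a‖ ^ 2 < 1 := by nlinarith [norm_nonneg a]
  have hw2 : ‖w‖ ^ 2 < 1 := by nlinarith [norm_nonneg w]
  have hpos : 0 < (1 - ‖a‖ ^ 2) * (1 - ‖w‖ ^ 2) := mul_pos (by linarith) (by linarith)
  have h2 : ‖a - w‖ ^ 2 < ‖1 - (starRingEnd ℂ) a * w‖ ^ 2 := by linarith
  have h3 : ‖a - w‖ < ‖1 - (starRingEnd ℂ) a * w‖ :=
    lt_of_pow_lt_pow_left₀ 2 (norm_nonneg _) h2
  rw [mob, norm_div, div_lt_one hdenpos]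
  exact h3

lemma mob_invol {a w : ℂ} (ha : ‖a‖ < 1) (hw : ‖w‖ < 1) : mob a (mob a w) = w := by
  have hden := mob_denom_ne ha hw
  have hne2 : (1 : ℂ) - (starRingEnd ℂ) a * a ≠ 0 := mob_denom_ne ha ha
  have hne2' : (1 : ℂ) - a * (starRingEnd ℂ) a ≠ 0 := by
    rwa [mul_comm] at hne2
  rw [mob, mob]
  rw [div_eq_iff (by rw [show (1 : ℂ) - (starRingEnd ℂ) a * ((a - w) / (1 - (starRingEnd ℂ) a * w))
      = (1 - (starRingEnd ℂ) a * a) / (1 - (starRingEnd ℂ) a * w) from by field_simp; ring]; exact div_ne_zero hne2 hden)]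
  rw [mul_div_assoc', sub_div' hden, sub_div' hden, mul_div_assoc', div_left_inj' hden]
  ring

lemma mob_diffOn {a : ℂ} (ha : ‖a‖ < 1) :
    DifferentiableOn ℂ (mob a) (ball (0 : ℂ) 1) := by
  apply DifferentiableOn.div
  · exact (differentiable_const a).differentiableOn.sub differentiable_id.differentiableOn
  · exact (differentiable_const (1 : ℂ)).differentiableOn.sub
      ((differentiable_const _).mul differentiable_id).differentiableOn
  · intro x hx
    exact mob_denom_ne ha (mem_ball_zero_iff.1 hx)

/-- Schwarz–Pick lemma. -/
lemma schwarz_pick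
    (f : ℂ → ℂ)
    (hf : DifferentiableOn ℂ f (ball (0 : ℂ) 1))
    (hmap : MapsTo f (ball (0 : ℂ) 1) (ball (0 : ℂ) 1))
    (z ζ : ℂ) (hz : z ∈ ball (0 : ℂ) 1) (hζ : ζ ∈ ball (0 : ℂ) 1) :
    ‖mob (f z) (f ζ)‖ ≤ ‖mob z ζ‖ := by
  have hz' : ‖z‖ < 1 := mem_ball_zero_iff.1 hz
  have hζ' : ‖ζ‖ < 1 := mem_ball_zero_iff.1 hζ
  have hfz : ‖f z‖ < 1 := mem_ball_zero_iff.1 (hmap hz)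
  set g : ℂ → ℂ := fun w => mob (f z) (f (mob z w)) with hg
  have hmz : MapsTo (mob z) (ball (0 : ℂ) 1) (ball (0 : ℂ) 1) := fun x hx =>
    mem_ball_zero_iff.2 (mob_maps hz' (mem_ball_zero_iff.1 hx))
  have hfcomp : DifferentiableOn ℂ (fun w => f (mob z w)) (ball (0 : ℂ) 1) :=
    hf.comp (mob_diffOn hz') hmz
  have hgd : DifferentiableOn ℂ g (ball (0 : ℂ) 1) :=
    (mob_diffOn hfz).comp hfcomp (fun x hx => hmap (hmz hx))
  have hgm : MapsTo g (ball (0 : ℂ) 1) (ball (0 : ℂ) 1) := fun x hx =>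
    mem_ball_zero_iff.2 (mob_maps hfz (mem_ball_zero_iff.1 (hmap (hmz hx))))
  have hg0 : g 0 = 0 := by
    have h1 : mob z 0 = z := by simp [mob]
    simp [hg, h1, mob, sub_self]
  have hw : mob z ζ ∈ ball (0 : ℂ) 1 := mem_ball_zero_iff.2 (mob_maps hz' hζ')
  have hd : dist (g (mob z ζ)) 0 ≤ dist (mob z ζ) 0 := by
    have h := Complex.dist_le_dist_of_mapsTo_ball hgd (by rw [hg0]; exact hgm.mono_right ball_subset_closedBall) hw
    rwa [hg0] at h
  simp only [dist_zero_right] at hd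
  have hval : g (mob z ζ) = mob (f z) (f ζ) := by
    simp [hg, mob_invol hz' hζ']
  rwa [hval] at hd

theorem schwarz_pick_kernel_bound
    (f : ℂ → ℂ)
    (hf : DifferentiableOn ℂ f (ball (0 : ℂ) 1))
    (hmap : MapsTo f (ball (0 : ℂ) 1) (ball (0 : ℂ) 1))
    (z ζ : ℂ) (hz : z ∈ ball (0 : ℂ) 1) (hζ : ζ ∈ ball (0 : ℂ) 1)
    (hne : z ≠ ζ) :
    ‖(1 - f z * (starRingEnd ℂ) (f ζ)) / (1 - z * (starRingEnd ℂ) ζ)‖ ^ 2 ≤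
      ((1 - ‖f z‖ ^ 2) / (1 - ‖z‖ ^ 2)) * ((1 - ‖f ζ‖ ^ 2) / (1 - ‖ζ‖ ^ 2)) := by
  have hz' : ‖z‖ < 1 := mem_ball_zero_iff.1 hz
  have hζ' : ‖ζ‖ < 1 := mem_ball_zero_iff.1 hζ
  have hfz : ‖f z‖ < 1 := mem_ball_zero_iff.1 (hmap hz)
  have hfζ : ‖f ζ‖ < 1 := mem_ball_zero_iff.1 (hmap hζ)
  have hconj : ∀ a w : ℂ, ‖(1 : ℂ) - (starRingEnd ℂ) a * w‖ = ‖(1 : ℂ) - a * (starRingEnd ℂ) w‖ := by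
    intro a w
    rw [← RCLike.norm_conj ((1 : ℂ) - (starRingEnd ℂ) a * w)]
    simp [map_sub, map_mul, mul_comm]
  set A := ‖(1 : ℂ) - f z * (starRingEnd ℂ) (f ζ)‖ with hA
  set B := ‖f z - f ζ‖ with hB
  set C := ‖(1 : ℂ) - z * (starRingEnd ℂ) ζ‖ with hC
  set D := ‖z - ζ‖ with hD
  have hApos : 0 < A := by
    rw [hA, ← hconj]
    exact norm_pos_iff.2 (mob_denom_ne hfz hfζ)
  have hCpos : 0 < C := by
    rw [hC, ← hconj]
    exact norm_pos_iff.2 (mob_denom_ne hz' hζ')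
  have hid1 : A ^ 2 - B ^ 2 = (1 - ‖f z‖ ^ 2) * (1 - ‖f ζ‖ ^ 2) := by
    rw [hA, ← hconj, hB]; exact key_id (f z) (f ζ)
  have hid2 : C ^ 2 - D ^ 2 = (1 - ‖z‖ ^ 2) * (1 - ‖ζ‖ ^ 2) := by
    rw [hC, ← hconj, hD]; exact key_id z ζ
  have hSP := schwarz_pick f hf hmap z ζ hz hζ
  have hSP' : B / A ≤ D / C := by
    rw [mob, mob, norm_div, norm_div, hconj, hconj] at hSP
    exact hSP
  have hBC : B * C ≤ D * A := (div_le_div_iff₀ hApos hCpos).1 hSP'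
  have hCD : 0 < C ^ 2 - D ^ 2 := by
    rw [hid2]
    apply mul_pos <;> nlinarith [norm_nonneg z, norm_nonneg ζ]
  have hRHS : ((1 - ‖f z‖ ^ 2) / (1 - ‖z‖ ^ 2)) * ((1 - ‖f ζ‖ ^ 2) / (1 - ‖ζ‖ ^ 2))
      = (A ^ 2 - B ^ 2) / (C ^ 2 - D ^ 2) := by
    rw [div_mul_div_comm, hid1, hid2]
  rw [hRHS, norm_div, ← hA, ← hC, div_pow, div_le_div_iff₀ (by positivity) hCD]
  nlinarith [mul_le_mul hBC hBC (by positivity) (by positivity),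
    sq_nonneg A, sq_nonneg B, sq_nonneg C, sq_nonneg D]
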